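/- Let V be a finite-dimensional real vector space, and consider W = V ⊕ V* with the natural symmetric pairing ⟨X+ξ, Y+η⟩ = ½(ξ(Y) + η(X)). Let V₊ ⊆ W be a subspace on which the pairing restricts to a positive definite form and which has dimension dim V. Then V₊ ∩ V = 0 and V₊ ∩ V* = 0, and consequently V₊ is the graph of a linear map a : V → V* whose symmetric part g (defined by g(X,Y) = ½(a(X)(Y) + a(Y)(X))) is a positive definite bilinear form on V. -/

import Mathlib

theorem positive_definite_subspace_is_metric_graph
    (V : Type*) [AddCommGroup V] [Module ℝ V] [FiniteDimensional ℝ V]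
    (p : (V × Module.Dual ℝ V) →ₗ[ℝ] (V × Module.Dual ℝ V) →ₗ[ℝ] ℝ)
    (hp : ∀ u v : V × Module.Dual ℝ V, p u v = (1/2) * (u.2 v.1 + v.2 u.1))
    (Vp : Submodule ℝ (V × Module.Dual ℝ V))
    (hpos : ∀ u ∈ Vp, u ≠ 0 → 0 < p u u)
    (hdim : Module.finrank ℝ Vp = Module.finrank ℝ V) :
    Vp ⊓ LinearMap.range (LinearMap.inl ℝ V (Module.Dual ℝ V)) = ⊥ ∧
    Vp ⊓ LinearMap.range (LinearMap.inr ℝ V (Module.Dual ℝ V)) = ⊥ ∧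
    ∃ a : V →ₗ[ℝ] Module.Dual ℝ V,
      Vp = LinearMap.graph a ∧
      ∀ X : V, X ≠ 0 → 0 < (1/2) * (a X X + a X X) := by
  have key1 : Vp ⊓ LinearMap.range (LinearMap.inl ℝ V (Module.Dual ℝ V)) = ⊥ := by
    rw [Submodule.eq_bot_iff]
    rintro u ⟨hu, X, rfl⟩
    by_contra h
    have := hpos _ hu h
    rw [hp] at this
    simp at this
  have key2 : Vp ⊓ LinearMap.range (LinearMap.inr ℝ V (Module.Dual ℝ V)) = ⊥ := by
    rw [Submodule.eq_bot_iff]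
    rintro u ⟨hu, ξ, rfl⟩
    by_contra h
    have := hpos _ hu h
    rw [hp] at this
    simp at this
  refine ⟨key1, key2, ?_⟩
  set f : Vp →ₗ[ℝ] V := (LinearMap.fst ℝ V (Module.Dual ℝ V)).comp Vp.subtype with hf
  have hker : LinearMap.ker f = ⊥ := by
    rw [LinearMap.ker_eq_bot']
    intro v hv
    have h1 : (v : V × Module.Dual ℝ V).1 = 0 := hv
    have hmem : (v : V × Module.Dual ℝ V) ∈
        Vp ⊓ LinearMap.range (LinearMap.inr ℝ V (Module.Dual ℝ V)) := by
      refine ⟨v.2, ⟨(v : V × Module.Dual ℝ V).2, ?_⟩⟩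
      exact Prod.ext (by simp [h1]) (by simp)
    rw [key2, Submodule.mem_bot] at hmem
    exact Subtype.ext hmem
  have hinj : Function.Injective f := by
    intro x y hxy
    have h1 : (x : V × Module.Dual ℝ V).1 = (y : V × Module.Dual ℝ V).1 := hxy
    have hmem : (x : V × Module.Dual ℝ V) - y ∈
        Vp ⊓ LinearMap.range (LinearMap.inr ℝ V (Module.Dual ℝ V)) := by
      refine ⟨Vp.sub_mem x.2 y.2, ⟨((x : V × Module.Dual ℝ V) - y).2, ?_⟩⟩
      exact Prod.ext (by simp [h1]) (by simp)
    rw [key2, Submodule.mem_bot] at hmem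
    exact Subtype.ext (sub_eq_zero.mp hmem)
  have hsurj : Function.Surjective f := by
    have h1 : Module.finrank ℝ (LinearMap.range f) = Module.finrank ℝ V := by
      rw [LinearMap.finrank_range_of_inj hinj, hdim]
    rw [← LinearMap.range_eq_top]
    exact Submodule.eq_top_of_finrank_eq h1
  let e : Vp ≃ₗ[ℝ] V := LinearEquiv.ofBijective f ⟨hinj, hsurj⟩
  let a : V →ₗ[ℝ] Module.Dual ℝ V :=
    (LinearMap.snd ℝ V (Module.Dual ℝ V)).comp (Vp.subtype.comp e.symm.toLinearMap)
  have ha : ∀ X : V, (X, a X) ∈ Vp := by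
    intro X
    have h1 : ((e.symm X : Vp) : V × Module.Dual ℝ V) = (X, a X) := by
      refine Prod.ext ?_ rfl
      exact e.apply_symm_apply X
    rw [← h1]
    exact (e.symm X).2
  have hgraph : Vp = LinearMap.graph a := by
    ext u
    rw [LinearMap.mem_graph_iff]
    constructor
    · intro hu
      have h1 : e.symm u.1 = ⟨u, hu⟩ := by
        apply e.injective
        rw [e.apply_symm_apply]
        rfl
      show u.2 = ((e.symm u.1 : Vp) : V × Module.Dual ℝ V).2
      rw [h1]
    · intro h
      have h2 : u = (u.1, a u.1) := by rw [← h]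
      rw [h2]; exact ha u.1
  refine ⟨a, hgraph, fun X hX => ?_⟩
  have hne : (X, a X) ≠ (0 : V × Module.Dual ℝ V) := by
    intro h
    exact hX (congrArg Prod.fst h)
  have := hpos _ (ha X) hne
  rwa [hp] at this
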